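/- arXiv:1903.12367 — 5 statements merged into one kernel-verified Lean document; each statement's English description precedes it below -/
import Mathlib

section
/- For c ∈ Cl(η), the right multiplication operator R_c satisfies ĝ(R_c ψ, φ) + ĝ(ψ, R_c φ) = 0 for all ψ, φ ∈ Cl(η) if and only if c lies in the subspace G spanned by the basis elements e_I with |I| ∈ {1,2}. -/
noncomputable section

open CliffordAlgebra

/-- Minkowski space ℝ⁴. -/
abbrev V4 : Type := Fin 4 → ℝ

/-- The Minkowski quadratic form η(x) = −x₀² + x₁² + x₂² + x₃². -/
def η : QuadraticForm ℝ V4 := QuadraticMap.weightedSumSquares ℝ ![(-1 : ℝ), 1, 1, 1]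

/-- The Clifford algebra Cl(η). -/
abbrev Cl : Type := CliffordAlgebra η

/-- Standard basis vectors e₀, e₁, e₂, e₃ of ℝ⁴. -/
def e (i : Fin 4) : V4 := Pi.single i 1

/-- The polar bilinear form B of η : B(v,w) = (η(v+w) − η(v) − η(w))/2. -/
def Bη (v w : V4) : ℝ := (η (v + w) - η v - η w) / 2

/-- γ_v : left multiplication by ι(v). -/
def γ (v : V4) : Module.End ℝ Cl := LinearMap.mulLeft ℝ (ι η v)

/-- R_c : right multiplication by c. -/
def Rc (c : Cl) : Module.End ℝ Cl := LinearMap.mulRight ℝ c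

/-- The basis element e_I = ι(e_{i₁})⋯ι(e_{i_k}) for I = {i₁ < ⋯ < i_k}. -/
def eI (I : Finset (Fin 4)) : Cl := ((I.sort (· ≤ ·)).map (fun i => ι η (e i))).prod

/-- Clifford conjugation: reversal composed with the grade involution. -/
def cconj : Cl →ₗ[ℝ] Cl := reverse ∘ₗ involute.toLinearMap

/-- The extended metric ĝ on Cl(η), relative to a coefficient functional π₀. -/
def ghat (π₀ : Cl →ₗ[ℝ] ℝ) (ψ φ : Cl) : ℝ := -(1/2 : ℝ) * π₀ (cconj ψ * φ + cconj φ * ψ)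

/-- The subspace G ⊆ Cl(η) spanned by the basis elements e_I with |I| ∈ {1,2}. -/
def Gsub : Submodule ℝ Cl :=
  Submodule.span ℝ (eI '' {I : Finset (Fin 4) | I.card = 1 ∨ I.card = 2})

set_option maxHeartbeats 1000000

namespace Aux

abbrev A (i : Fin 4) : Cl := ι η (e i)

lemma eta_e : ∀ i, η (e i) = ![(-1:ℝ),1,1,1] i := by
  intro i
  fin_cases i <;>
    simp [η, e, QuadraticMap.weightedSumSquares_apply, Fin.sum_univ_four, Pi.single_apply]

lemma polar_e {i j : Fin 4} (h : i ≠ j) : QuadraticMap.polar η (e i) (e j) = 0 := by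
  fin_cases i <;> fin_cases j <;>
    first
    | exact absurd rfl h
    | (simp [QuadraticMap.polar, η, e, QuadraticMap.weightedSumSquares_apply,
        Fin.sum_univ_four, Pi.single_apply]; try ring)

lemma sq' (i : Fin 4) : A i * A i = algebraMap ℝ Cl (![(-1:ℝ),1,1,1] i) := by
  rw [ι_sq_scalar, eta_e]

lemma swap_ (i j : Fin 4) (h : i ≠ j) : A j * A i = -(A i * A j) := by
  have := ι_mul_ι_add_swap (Q := η) (e j) (e i)
  rw [QuadraticMap.polar_comm, polar_e h, map_zero] at this
  linear_combination (norm := noncomm_ring) this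


@[simp] lemma am0 : (algebraMap ℝ Cl) (η (e 0)) = -1 := by rw [eta_e]; simp
@[simp] lemma am1 : (algebraMap ℝ Cl) (η (e 1)) = 1 := by rw [eta_e]; simp
@[simp] lemma am2 : (algebraMap ℝ Cl) (η (e 2)) = 1 := by rw [eta_e]; simp
@[simp] lemma am3 : (algebraMap ℝ Cl) (η (e 3)) = 1 := by rw [eta_e]; simp

@[simp] lemma sq0 : A 0 * A 0 = -1 := by rw [sq']; simp
@[simp] lemma sq1 : A 1 * A 1 = 1 := by rw [sq']; simp
@[simp] lemma sq2 : A 2 * A 2 = 1 := by rw [sq']; simp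
@[simp] lemma sq3 : A 3 * A 3 = 1 := by rw [sq']; simp
@[simp] lemma sq0' (x : Cl) : A 0 * (A 0 * x) = -x := by rw [← mul_assoc, sq0]; simp
@[simp] lemma sq1' (x : Cl) : A 1 * (A 1 * x) = x := by rw [← mul_assoc, sq1]; simp
@[simp] lemma sq2' (x : Cl) : A 2 * (A 2 * x) = x := by rw [← mul_assoc, sq2]; simp
@[simp] lemma sq3' (x : Cl) : A 3 * (A 3 * x) = x := by rw [← mul_assoc, sq3]; simp
@[simp] lemma sw10 : A 1 * A 0 = -(A 0 * A 1) := swap_ _ _ (by decide)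
@[simp] lemma sw20 : A 2 * A 0 = -(A 0 * A 2) := swap_ _ _ (by decide)
@[simp] lemma sw30 : A 3 * A 0 = -(A 0 * A 3) := swap_ _ _ (by decide)
@[simp] lemma sw21 : A 2 * A 1 = -(A 1 * A 2) := swap_ _ _ (by decide)
@[simp] lemma sw31 : A 3 * A 1 = -(A 1 * A 3) := swap_ _ _ (by decide)
@[simp] lemma sw32 : A 3 * A 2 = -(A 2 * A 3) := swap_ _ _ (by decide)
@[simp] lemma sw10' (x : Cl) : A 1 * (A 0 * x) = -(A 0 * (A 1 * x)) := by
  rw [← mul_assoc, sw10]; simp [mul_assoc]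
@[simp] lemma sw20' (x : Cl) : A 2 * (A 0 * x) = -(A 0 * (A 2 * x)) := by
  rw [← mul_assoc, sw20]; simp [mul_assoc]
@[simp] lemma sw30' (x : Cl) : A 3 * (A 0 * x) = -(A 0 * (A 3 * x)) := by
  rw [← mul_assoc, sw30]; simp [mul_assoc]
@[simp] lemma sw21' (x : Cl) : A 2 * (A 1 * x) = -(A 1 * (A 2 * x)) := by
  rw [← mul_assoc, sw21]; simp [mul_assoc]
@[simp] lemma sw31' (x : Cl) : A 3 * (A 1 * x) = -(A 1 * (A 3 * x)) := by
  rw [← mul_assoc, sw31]; simp [mul_assoc]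
@[simp] lemma sw32' (x : Cl) : A 3 * (A 2 * x) = -(A 2 * (A 3 * x)) := by
  rw [← mul_assoc, sw32]; simp [mul_assoc]

lemma sort_insert' (a : Fin 4) (s : Finset (Fin 4)) (h₁ : ∀ b ∈ s, a ≤ b) (h₂ : a ∉ s) :
    (insert a s).sort (· ≤ ·) = a :: s.sort (· ≤ ·) :=
  Finset.sort_insert _ h₁ h₂

lemma eI_empty : eI ∅ = 1 := by simp [eI]
lemma eI_single (i : Fin 4) : eI {i} = A i := by simp [eI]
lemma eI_pair {i j : Fin 4} (h : i < j) : eI {i, j} = A i * A j := by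
  rw [eI, sort_insert' i {j} (by simpa using h.le) (by simpa using h.ne)]
  simp
lemma eI_triple {i j k : Fin 4} (h1 : i < j) (h2 : j < k) :
    eI {i, j, k} = A i * (A j * A k) := by
  rw [eI, sort_insert' i {j,k} ?_ ?_, sort_insert' j {k} (by simpa using h2.le) (by simpa using h2.ne)]
  · simp [mul_assoc]
  · intro b hb
    simp only [Finset.mem_insert, Finset.mem_singleton] at hb
    rcases hb with rfl | rfl
    · exact h1.le
    · exact (h1.trans h2).le
  · simp only [Finset.mem_insert, Finset.mem_singleton]
    push_neg
    exact ⟨h1.ne, (h1.trans h2).ne⟩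
lemma eI_quad : eI {0,1,2,3} = A 0 * (A 1 * (A 2 * A 3)) := by
  rw [eI, sort_insert' 0 {1,2,3} (by decide) (by decide),
      sort_insert' 1 {2,3} (by decide) (by decide),
      sort_insert' 2 {3} (by decide) (by decide)]
  simp [mul_assoc]

-- the sixteen explicit forms
lemma e0 : eI ∅ = 1 := eI_empty
lemma e1 : eI {0} = A 0 := eI_single 0
lemma e2 : eI {1} = A 1 := eI_single 1
lemma e3 : eI {2} = A 2 := eI_single 2
lemma e4 : eI {3} = A 3 := eI_single 3
lemma e5 : eI {0,1} = A 0 * A 1 := eI_pair (by decide)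
lemma e6 : eI {0,2} = A 0 * A 2 := eI_pair (by decide)
lemma e7 : eI {0,3} = A 0 * A 3 := eI_pair (by decide)
lemma e8 : eI {1,2} = A 1 * A 2 := eI_pair (by decide)
lemma e9 : eI {1,3} = A 1 * A 3 := eI_pair (by decide)
lemma e10 : eI {2,3} = A 2 * A 3 := eI_pair (by decide)
lemma e11 : eI {0,1,2} = A 0 * (A 1 * A 2) := eI_triple (by decide) (by decide)
lemma e12 : eI {0,1,3} = A 0 * (A 1 * A 3) := eI_triple (by decide) (by decide)
lemma e13 : eI {0,2,3} = A 0 * (A 2 * A 3) := eI_triple (by decide) (by decide)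
lemma e14 : eI {1,2,3} = A 1 * (A 2 * A 3) := eI_triple (by decide) (by decide)
lemma e15 : eI {0,1,2,3} = A 0 * (A 1 * (A 2 * A 3)) := eI_quad

lemma enum (I : Finset (Fin 4)) : I = ∅ ∨ I = {0} ∨ I = {1} ∨ I = {2} ∨ I = {3} ∨
    I = {0,1} ∨ I = {0,2} ∨ I = {0,3} ∨ I = {1,2} ∨ I = {1,3} ∨ I = {2,3} ∨
    I = {0,1,2} ∨ I = {0,1,3} ∨ I = {0,2,3} ∨ I = {1,2,3} ∨ I = {0,1,2,3} := by
  revert I; decide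

-- clifford conjugation facts
lemma cconj_mul (x y : Cl) : cconj (x * y) = cconj y * cconj x := by
  simp [cconj, reverse.map_mul]
lemma cconj_one : cconj (1 : Cl) = 1 := by simp [cconj]
lemma cconj_A (i : Fin 4) : cconj (A i) = -(A i) := by simp [cconj]
lemma cconj_cconj (x : Cl) : cconj (cconj x) = x := by
  simp [cconj, reverse_involute, involute_involute, reverse_reverse]

end Aux

namespace Aux

section Table
variable (π₀ : Cl →ₗ[ℝ] ℝ) (hπ : ∀ K, π₀ (eI K) = if K = ∅ then 1 else 0)
include hπ

lemma p0 : π₀ 1 = 1 := by have := hπ ∅; rwa [e0, if_pos rfl] at this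
lemma pm : π₀ (A 0) = 0 ∧ π₀ (A 1) = 0 ∧ π₀ (A 2) = 0 ∧ π₀ (A 3) = 0 ∧
    π₀ (A 0 * A 1) = 0 ∧ π₀ (A 0 * A 2) = 0 ∧ π₀ (A 0 * A 3) = 0 ∧
    π₀ (A 1 * A 2) = 0 ∧ π₀ (A 1 * A 3) = 0 ∧ π₀ (A 2 * A 3) = 0 ∧
    π₀ (A 0 * (A 1 * A 2)) = 0 ∧ π₀ (A 0 * (A 1 * A 3)) = 0 ∧
    π₀ (A 0 * (A 2 * A 3)) = 0 ∧ π₀ (A 1 * (A 2 * A 3)) = 0 ∧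
    π₀ (A 0 * (A 1 * (A 2 * A 3))) = 0 := by
  refine ⟨?_,?_,?_,?_,?_,?_,?_,?_,?_,?_,?_,?_,?_,?_,?_⟩ <;>
  · first
    | (rw [← e1, hπ, if_neg (by decide)])
    | (rw [← e2, hπ, if_neg (by decide)])
    | (rw [← e3, hπ, if_neg (by decide)])
    | (rw [← e4, hπ, if_neg (by decide)])
    | (rw [← e5, hπ, if_neg (by decide)])
    | (rw [← e6, hπ, if_neg (by decide)])
    | (rw [← e7, hπ, if_neg (by decide)])
    | (rw [← e8, hπ, if_neg (by decide)])
    | (rw [← e9, hπ, if_neg (by decide)])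
    | (rw [← e10, hπ, if_neg (by decide)])
    | (rw [← e11, hπ, if_neg (by decide)])
    | (rw [← e12, hπ, if_neg (by decide)])
    | (rw [← e13, hπ, if_neg (by decide)])
    | (rw [← e14, hπ, if_neg (by decide)])
    | (rw [← e15, hπ, if_neg (by decide)])

lemma offdiag {I J : Finset (Fin 4)} (h : I ≠ J) : π₀ (eI I * eI J) = 0 := by
  obtain ⟨q1,q2,q3,q4,q5,q6,q7,q8,q9,q10,q11,q12,q13,q14,q15⟩ := pm π₀ hπ
  have P0 := p0 π₀ hπ
  rcases enum I with rfl|rfl|rfl|rfl|rfl|rfl|rfl|rfl|rfl|rfl|rfl|rfl|rfl|rfl|rfl|rfl <;>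
    rcases enum J with rfl|rfl|rfl|rfl|rfl|rfl|rfl|rfl|rfl|rfl|rfl|rfl|rfl|rfl|rfl|rfl <;>
    first
    | exact absurd rfl h
    | (simp only [e0,e1,e2,e3,e4,e5,e6,e7,e8,e9,e10,e11,e12,e13,e14,e15, mul_assoc,
        sq0,sq1,sq2,sq3,sq0',sq1',sq2',sq3',sw10,sw20,sw30,sw21,sw31,sw32,
        sw10',sw20',sw30',sw21',sw31',sw32', one_mul, mul_one, mul_neg, neg_mul, neg_neg,
        map_neg, neg_eq_zero];
       assumption)

lemma diag (I : Finset (Fin 4)) : π₀ (eI I * eI I) ≠ 0 := by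
  have P0 := p0 π₀ hπ
  rcases enum I with rfl|rfl|rfl|rfl|rfl|rfl|rfl|rfl|rfl|rfl|rfl|rfl|rfl|rfl|rfl|rfl <;>
    · simp only [e0,e1,e2,e3,e4,e5,e6,e7,e8,e9,e10,e11,e12,e13,e14,e15, mul_assoc,
        sq0,sq1,sq2,sq3,sq0',sq1',sq2',sq3',sw10,sw20,sw30,sw21,sw31,sw32,
        sw10',sw20',sw30',sw21',sw31',sw32', one_mul, mul_one, mul_neg, neg_mul, neg_neg,
        map_neg, neg_eq_zero, P0]
      norm_num

lemma trace (x y : Cl) (b : Module.Basis (Finset (Fin 4)) ℝ Cl) (hbe : ∀ I, b I = eI I) :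
    π₀ (x * y) = π₀ (y * x) := by
  have : (LinearMap.mul ℝ Cl).compr₂ π₀ = ((LinearMap.mul ℝ Cl).compr₂ π₀).flip := by
    refine b.ext fun I => b.ext fun J => ?_
    simp only [LinearMap.compr₂_apply, LinearMap.mul_apply', LinearMap.flip_apply, hbe]
    by_cases h : I = J
    · rw [h]
    · rw [offdiag π₀ hπ h, offdiag π₀ hπ (Ne.symm h)]
  exact DFunLike.congr_fun (DFunLike.congr_fun this x) y

lemma nondeg (x : Cl) (b : Module.Basis (Finset (Fin 4)) ℝ Cl) (hbe : ∀ I, b I = eI I)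
    (h : ∀ y, π₀ (x * y) = 0) : x = 0 := by
  refine b.ext_elem fun J => ?_
  have h1 := h (eI J)
  rw [← b.sum_repr x] at h1
  rw [Finset.sum_mul] at h1
  rw [map_sum] at h1
  have h2 : ∀ I ∈ Finset.univ, I ≠ J → π₀ (b.repr x I • b I * eI J) = 0 := by
    intro I _ hIJ
    rw [smul_mul_assoc, map_smul, hbe, offdiag π₀ hπ hIJ, smul_zero]
  rw [Finset.sum_eq_single_of_mem J (Finset.mem_univ J) h2] at h1
  rw [smul_mul_assoc, map_smul, hbe] at h1
  have := diag π₀ hπ J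
  simpa using (mul_eq_zero.mp h1).resolve_right this

end Table

-- conjugation table
lemma cconj_neg_part {I : Finset (Fin 4)} (h : I.card = 1 ∨ I.card = 2) :
    cconj (eI I) = -eI I := by
  rcases enum I with rfl|rfl|rfl|rfl|rfl|rfl|rfl|rfl|rfl|rfl|rfl|rfl|rfl|rfl|rfl|rfl <;>
    first
    | (exfalso; revert h; decide)
    | (simp only [e0,e1,e2,e3,e4,e5,e6,e7,e8,e9,e10,e11,e12,e13,e14,e15, cconj_mul, cconj_A,
        mul_assoc, sq0,sq1,sq2,sq3,sq0',sq1',sq2',sq3',sw10,sw20,sw30,sw21,sw31,sw32,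
        sw10',sw20',sw30',sw21',sw31',sw32', one_mul, mul_one, mul_neg, neg_mul, neg_neg])

lemma cconj_pos_part {I : Finset (Fin 4)} (h : ¬(I.card = 1 ∨ I.card = 2)) :
    cconj (eI I) = eI I := by
  rcases enum I with rfl|rfl|rfl|rfl|rfl|rfl|rfl|rfl|rfl|rfl|rfl|rfl|rfl|rfl|rfl|rfl <;>
    first
    | (exfalso; exact h (by decide))
    | (simp only [e0,e1,e2,e3,e4,e5,e6,e7,e8,e9,e10,e11,e12,e13,e14,e15, cconj_mul, cconj_A,
        cconj_one, mul_assoc, sq0,sq1,sq2,sq3,sq0',sq1',sq2',sq3',sw10,sw20,sw30,sw21,sw31,sw32,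
        sw10',sw20',sw30',sw21',sw31',sw32', one_mul, mul_one, mul_neg, neg_mul, neg_neg])

lemma mem_Gsub_iff (b : Module.Basis (Finset (Fin 4)) ℝ Cl) (hbe : ∀ I, b I = eI I) (c : Cl) :
    c ∈ Gsub ↔ cconj c = -c := by
  constructor
  · intro hc
    induction hc using Submodule.span_induction with
    | mem x hx =>
      obtain ⟨I, hI, rfl⟩ := hx
      exact cconj_neg_part hI
    | zero => simp
    | add x y _ _ hx hy => rw [map_add, hx, hy, neg_add]
    | smul a x _ hx => rw [map_smul, hx, smul_neg]
  · intro hc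
    have hP : ∀ z : Cl, (1/2 : ℝ) • (z - cconj z) ∈ Gsub := by
      intro z
      have hsub : Submodule.span ℝ (Set.range b) ≤
          Gsub.comap ((1/2 : ℝ) • (LinearMap.id - cconj)) := by
        rw [Submodule.span_le]
        rintro _ ⟨I, rfl⟩
        simp only [SetLike.mem_coe, Submodule.mem_comap, LinearMap.smul_apply, LinearMap.sub_apply,
          LinearMap.id_apply, hbe]
        by_cases h : I.card = 1 ∨ I.card = 2
        · rw [cconj_neg_part h, sub_neg_eq_add]
          have : eI I ∈ Gsub := Submodule.subset_span ⟨I, h, rfl⟩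
          have h2 : (1/2 : ℝ) • (eI I + eI I) = eI I := by
            rw [← two_smul ℝ (eI I), smul_smul]; norm_num
          rw [h2]; exact this
        · rw [cconj_pos_part h, sub_self, smul_zero]
          exact Submodule.zero_mem _
      have hz : z ∈ Submodule.span ℝ (Set.range b) := by rw [b.span_eq]; trivial
      exact hsub hz
    have := hP c
    rwa [hc, sub_neg_eq_add, ← two_smul ℝ c, smul_smul, show (1/2 : ℝ) * 2 = 1 by norm_num,
      one_smul] at this

end Aux

/-- R_c is anti-self-adjoint for ĝ iff c lies in the span G of the
basis elements e_I with |I| ∈ {1,2}. -/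
theorem stmt5 (b : Module.Basis (Finset (Fin 4)) ℝ Cl) (hb : ∀ I, b I = eI I) (c : Cl) :
    (∀ ψ φ : Cl, ghat (b.coord ∅) (ψ * c) φ + ghat (b.coord ∅) ψ (φ * c) = 0) ↔ c ∈ Gsub := by
  set π₀ := b.coord ∅ with hπ₀
  have hπ : ∀ K, π₀ (eI K) = if K = ∅ then 1 else 0 := by
    intro K
    rw [hπ₀, ← hb, Module.Basis.coord_apply, Module.Basis.repr_self, Finsupp.single_apply]
  have pconj : ∀ x : Cl, π₀ (cconj x) = π₀ x := by
    have hcomp : π₀ ∘ₗ cconj = π₀ := by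
      refine b.ext fun I => ?_
      simp only [LinearMap.comp_apply, hb]
      by_cases h : I.card = 1 ∨ I.card = 2
      · have hne : I ≠ ∅ := by rintro rfl; revert h; decide
        rw [Aux.cconj_neg_part h, map_neg, hπ, if_neg hne]
        ring
      · rw [Aux.cconj_pos_part h]
    intro x
    exact DFunLike.congr_fun hcomp x
  constructor
  · intro H
    have key : ∀ φ : Cl, π₀ ((cconj c + c) * φ) = 0 := by
      intro φ
      have h1 := H 1 φ
      simp only [ghat, one_mul, mul_one, Aux.cconj_one, map_add] at h1
      have k1 : π₀ (cconj φ * c) = π₀ (cconj c * φ) := by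
        calc π₀ (cconj φ * c) = π₀ (cconj (cconj φ * c)) := (pconj _).symm
          _ = π₀ (cconj c * cconj (cconj φ)) := by rw [Aux.cconj_mul]
          _ = π₀ (cconj c * φ) := by rw [Aux.cconj_cconj]
      have k2 : π₀ (cconj (φ * c)) = π₀ (φ * c) := pconj _
      have k3 : π₀ (φ * c) = π₀ (c * φ) := Aux.trace π₀ hπ φ c b hb
      rw [add_mul, map_add]
      linarith
    have h0 : cconj c + c = 0 := Aux.nondeg π₀ hπ _ b hb key
    exact (Aux.mem_Gsub_iff b hb c).mpr (eq_neg_of_add_eq_zero_left h0)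
  · intro hc ψ φ
    have hcc := (Aux.mem_Gsub_iff b hb c).mp hc
    have hψ : cconj (ψ * c) = -(c * cconj ψ) := by rw [Aux.cconj_mul, hcc, neg_mul]
    have hφ : cconj (φ * c) = -(c * cconj φ) := by rw [Aux.cconj_mul, hcc, neg_mul]
    have t1 : π₀ (cconj ψ * (φ * c)) = π₀ (c * (cconj ψ * φ)) := by
      rw [← mul_assoc]
      exact Aux.trace π₀ hπ _ c b hb
    have t2 : π₀ (cconj φ * (ψ * c)) = π₀ (c * (cconj φ * ψ)) := by
      rw [← mul_assoc]
      exact Aux.trace π₀ hπ _ c b hb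
    simp only [ghat, hψ, hφ, neg_mul, map_add, map_neg, mul_assoc]
    linarith
end
end

section
/- For every linear isometry f of (ℝ⁴, η), the induced algebra automorphism f̂ of Cl(η) preserves the extended metric: ĝ(f̂(ψ), f̂(φ)) = ĝ(ψ, φ) for all ψ, φ ∈ Cl(η). -/
noncomputable section

open CliffordAlgebra

/-- The algebra automorphism f̂ of Cl(η) induced by a linear isometry f of (ℝ⁴,η). -/
def hatAut (f : V4 ≃ₗ[ℝ] V4) (hf : ∀ v, η (f v) = η v) : Cl →ₐ[ℝ] Cl :=
  CliffordAlgebra.lift η ⟨(ι η) ∘ₗ (f : V4 →ₗ[ℝ] V4), fun v => by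
    simp only [LinearMap.comp_apply, LinearEquiv.coe_coe, ι_sq_scalar, hf]⟩

lemma isometry_symm (f : V4 ≃ₗ[ℝ] V4) (hf : ∀ v, η (f v) = η v) :
    ∀ v, η (f.symm v) = η v := fun v => by
  have h := hf (f.symm v)
  rw [f.apply_symm_apply] at h
  exact h.symm

/-- The action of a linear isometry f on a quadruple θ of endomorphisms of Cl(η):
(f·θ)_α = Σ_β c_{βα} • (f̂ ∘ θ_β ∘ f̂⁻¹), where f⁻¹(e_α) = Σ_β c_{βα} e_β. -/
def act (f : V4 ≃ₗ[ℝ] V4) (hf : ∀ v, η (f v) = η v)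
    (θ : Fin 4 → Module.End ℝ Cl) : Fin 4 → Module.End ℝ Cl :=
  fun α => ∑ β : Fin 4, f.symm (e α) β •
    ((hatAut f hf).toLinearMap ∘ₗ θ β ∘ₗ (hatAut f.symm (isometry_symm f hf)).toLinearMap)

lemma ηe (i : Fin 4) : η (e i) = ![(-1:ℝ),1,1,1] i := by
  fin_cases i <;> simp [η, e, QuadraticMap.weightedSumSquares_apply, Fin.sum_univ_four, Pi.single_apply]

lemma polar_e (i j : Fin 4) (h : i ≠ j) : QuadraticMap.polar η (e i) (e j) = 0 := by
  unfold QuadraticMap.polar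
  fin_cases i <;> fin_cases j <;>
    simp_all [η, e, QuadraticMap.weightedSumSquares_apply, Fin.sum_univ_four, Pi.single_apply]

lemma anticomm {i j : Fin 4} (h : i ≠ j) : ι η (e i) * ι η (e j) = -(ι η (e j) * ι η (e i)) := by
  have h2 := CliffordAlgebra.ι_mul_ι_add_swap (Q := η) (e i) (e j)
  rw [polar_e i j h] at h2
  simp at h2
  linear_combination (norm := noncomm_ring) h2

lemma swap_lt {i j : Fin 4} (h : j < i) (x : Cl) :
    ι η (e i) * (ι η (e j) * x) = -(ι η (e j) * (ι η (e i) * x)) := by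
  rw [← mul_assoc, anticomm h.ne', neg_mul, mul_assoc]

lemma swap_lt2 {i j : Fin 4} (h : j < i) :
    ι η (e i) * ι η (e j) = -(ι η (e j) * ι η (e i)) := anticomm h.ne'

lemma sq' (i : Fin 4) (x : Cl) : ι η (e i) * (ι η (e i) * x) = (![(-1:ℝ),1,1,1] i) • x := by
  rw [← mul_assoc, ι_sq_scalar, ηe, Algebra.smul_def]

lemma esq (i : Fin 4) : ι η (e i) * ι η (e i) = (![(-1:ℝ),1,1,1] i) • (1 : Cl) := by
  rw [ι_sq_scalar, ηe, Algebra.algebraMap_eq_smul_one]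

set_option maxHeartbeats 1000000 in
lemma keyI (I : Finset (Fin 4)) (hI : I ≠ ∅) :
    ∃ j : Fin 4, ι η (e j) * eI I = -(eI I * ι η (e j)) ∧ ι η (e j) * ι η (e j) = algebraMap ℝ Cl (![(-1:ℝ),1,1,1] j) := by
  fin_cases I
  · exact absurd rfl hI
  all_goals (
    first
    | (refine ⟨0, ?_, by rw [ι_sq_scalar, ηe]⟩
       simp +decide [eI, Finset.sort, Multiset.coe_sort, List.mergeSort_eq_insertionSort,
        swap_lt, swap_lt2, esq, sq', mul_assoc, mul_one, mul_neg, neg_mul,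
        neg_neg, smul_mul_assoc, mul_smul_comm, smul_smul, smul_neg, neg_smul]
       done)
    | (refine ⟨1, ?_, by rw [ι_sq_scalar, ηe]⟩
       simp +decide [eI, Finset.sort, Multiset.coe_sort, List.mergeSort_eq_insertionSort,
        swap_lt, swap_lt2, esq, sq', mul_assoc, mul_one, mul_neg, neg_mul,
        neg_neg, smul_mul_assoc, mul_smul_comm, smul_smul, smul_neg, neg_smul]
       done)
    | (refine ⟨2, ?_, by rw [ι_sq_scalar, ηe]⟩
       simp +decide [eI, Finset.sort, Multiset.coe_sort, List.mergeSort_eq_insertionSort,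
        swap_lt, swap_lt2, esq, sq', mul_assoc, mul_one, mul_neg, neg_mul,
        neg_neg, smul_mul_assoc, mul_smul_comm, smul_smul, smul_neg, neg_smul]
       done)
    | (refine ⟨3, ?_, by rw [ι_sq_scalar, ηe]⟩
       simp +decide [eI, Finset.sort, Multiset.coe_sort, List.mergeSort_eq_insertionSort,
        swap_lt, swap_lt2, esq, sq', mul_assoc, mul_one, mul_neg, neg_mul,
        neg_neg, smul_mul_assoc, mul_smul_comm, smul_smul, smul_neg, neg_smul]
       done)
  )

lemma mulLeft_smul' (s : ℝ) (x : Cl) :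
    LinearMap.mulLeft ℝ (s • x) = s • LinearMap.mulLeft ℝ x := by
  ext y; simp [smul_mul_assoc]

lemma trace_zero_of_anticomm (b : Module.Basis (Finset (Fin 4)) ℝ Cl) (u x : Cl) (s : ℝ) (hs : s ≠ 0)
    (hu : u * u = algebraMap ℝ Cl s) (h : u * x = -(x * u)) :
    LinearMap.trace ℝ Cl (LinearMap.mulLeft ℝ x) = 0 := by
  haveI : Module.Finite ℝ Cl := Module.Finite.of_basis b
  set A := LinearMap.mulLeft ℝ u
  set X := LinearMap.mulLeft ℝ x
  have hAA : A * A = s • (1 : Module.End ℝ Cl) := by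
    simp only [A, Module.End.mul_eq_comp, ← LinearMap.mulLeft_mul]
    rw [hu]
    ext y
    simp [Algebra.smul_def]
  have hAXA : A * X * A = (-s) • X := by
    simp only [A, X, Module.End.mul_eq_comp, ← LinearMap.mulLeft_mul]
    have hx : u * x * u = (-s) • x := by
      rw [h, neg_mul, mul_assoc, hu]
      rw [← Algebra.commutes s x, ← Algebra.smul_def, neg_smul]
    rw [hx, mulLeft_smul']
  have h1 : LinearMap.trace ℝ Cl (A * X * A) = s * LinearMap.trace ℝ Cl X := by
    rw [LinearMap.trace_mul_comm, ← mul_assoc, hAA, smul_mul_assoc, one_mul, map_smul,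
      smul_eq_mul]
  rw [hAXA, map_smul, smul_eq_mul, neg_mul] at h1
  have h2 : s * ((LinearMap.trace ℝ Cl) X) = 0 := by linarith
  exact (mul_eq_zero.mp h2).resolve_left hs

lemma eI_empty : eI ∅ = 1 := by simp [eI]

lemma coord_trace (b : Module.Basis (Finset (Fin 4)) ℝ Cl) (hb : ∀ I, b I = eI I) (x : Cl) :
    (16 : ℝ) * b.coord ∅ x = LinearMap.trace ℝ Cl (LinearMap.mulLeft ℝ x) := by
  haveI : Module.Finite ℝ Cl := Module.Finite.of_basis b
  have key : (16 : ℝ) • b.coord ∅ = (LinearMap.trace ℝ Cl) ∘ₗ (LinearMap.mul ℝ Cl) := by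
    apply b.ext
    intro I
    by_cases hI : I = ∅
    · subst hI
      rw [hb, eI_empty]
      have : (LinearMap.mul ℝ Cl) (1 : Cl) = LinearMap.mulLeft ℝ (1 : Cl) := rfl
      simp only [LinearMap.smul_apply, LinearMap.comp_apply, this, LinearMap.mulLeft_one]
      rw [LinearMap.trace_id]
      have hfr : Module.finrank ℝ Cl = 16 := by
        rw [Module.finrank_eq_card_basis b]
        simp [Fintype.card_finset]
      rw [hfr]
      rw [show (1:Cl) = b ∅ by rw [hb, eI_empty]]
      simp [Module.Basis.coord_apply, Module.Basis.repr_self]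
    · obtain ⟨j, hj, hjsq⟩ := keyI I hI
      have hs : (![(-1:ℝ),1,1,1] j) ≠ 0 := by fin_cases j <;> norm_num
      have := trace_zero_of_anticomm b (ι η (e j)) (eI I) _ hs hjsq hj
      have hmul : (LinearMap.mul ℝ Cl) (eI I) = LinearMap.mulLeft ℝ (eI I) := rfl
      simp only [LinearMap.smul_apply, LinearMap.comp_apply, hb, hmul, this]
      rw [show eI I = b I from (hb I).symm]
      simp [Module.Basis.coord_apply, Module.Basis.repr_self, Finsupp.single_apply, Ne.symm hI, hI]
  have := congrFun (congrArg DFunLike.coe key) x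
  simp [smul_eq_mul] at this
  rw [Module.Basis.coord_apply]
  exact this

lemma hatAut_ι (f : V4 ≃ₗ[ℝ] V4) (hf : ∀ v, η (f v) = η v) (v : V4) :
    hatAut f hf (ι η v) = ι η (f v) := by
  simp [hatAut, lift_ι_apply]

lemma hatAut_comp_symm (f : V4 ≃ₗ[ℝ] V4) (hf : ∀ v, η (f v) = η v) :
    (hatAut f hf).comp (hatAut f.symm (isometry_symm f hf)) = AlgHom.id ℝ Cl := by
  apply CliffordAlgebra.hom_ext
  apply LinearMap.ext
  intro v
  simp [hatAut_ι]

lemma hatAut_symm_comp (f : V4 ≃ₗ[ℝ] V4) (hf : ∀ v, η (f v) = η v) :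
    (hatAut f.symm (isometry_symm f hf)).comp (hatAut f hf) = AlgHom.id ℝ Cl := by
  apply CliffordAlgebra.hom_ext
  apply LinearMap.ext
  intro v
  simp [hatAut_ι]

lemma trace_hatAut (b : Module.Basis (Finset (Fin 4)) ℝ Cl) (f : V4 ≃ₗ[ℝ] V4)
    (hf : ∀ v, η (f v) = η v) (x : Cl) :
    LinearMap.trace ℝ Cl (LinearMap.mulLeft ℝ (hatAut f hf x)) =
      LinearMap.trace ℝ Cl (LinearMap.mulLeft ℝ x) := by
  haveI : Module.Finite ℝ Cl := Module.Finite.of_basis b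
  set F := (hatAut f hf).toLinearMap
  set G := (hatAut f.symm (isometry_symm f hf)).toLinearMap
  have hFG : ∀ y, hatAut f hf (hatAut f.symm (isometry_symm f hf) y) = y := fun y =>
    congrArg (fun φ => φ y) (congrArg DFunLike.coe (hatAut_comp_symm f hf))
  have hGF : G * F = 1 := by
    ext y
    exact congrArg (fun φ => φ y) (congrArg DFunLike.coe (hatAut_symm_comp f hf))
  have hconj : LinearMap.mulLeft ℝ (hatAut f hf x) = F * (LinearMap.mulLeft ℝ x * G) := by
    ext y
    simp only [LinearMap.mulLeft_apply, Module.End.mul_apply, F, G, AlgHom.toLinearMap_apply]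
    rw [map_mul, hFG y]
  rw [hconj, LinearMap.trace_mul_comm, mul_assoc, hGF, mul_one]

lemma coord_hatAut (b : Module.Basis (Finset (Fin 4)) ℝ Cl) (hb : ∀ I, b I = eI I)
    (f : V4 ≃ₗ[ℝ] V4) (hf : ∀ v, η (f v) = η v) (x : Cl) :
    b.coord ∅ (hatAut f hf x) = b.coord ∅ x := by
  have h1 := coord_trace b hb (hatAut f hf x)
  have h2 := coord_trace b hb x
  have h3 := trace_hatAut b f hf x
  nlinarith [h1, h2, h3]

lemma involute_hatAut (f : V4 ≃ₗ[ℝ] V4) (hf : ∀ v, η (f v) = η v) (x : Cl) :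
    involute (hatAut f hf x) = hatAut f hf (involute x) := by
  have : (involute (Q := η)).comp (hatAut f hf) = (hatAut f hf).comp involute := by
    apply CliffordAlgebra.hom_ext
    apply LinearMap.ext
    intro v
    simp [hatAut_ι, involute_ι]
  exact congrArg (fun φ => φ x) (congrArg DFunLike.coe this)

lemma reverse_hatAut (f : V4 ≃ₗ[ℝ] V4) (hf : ∀ v, η (f v) = η v) (x : Cl) :
    reverse (hatAut f hf x) = hatAut f hf (reverse x) := by
  induction x using CliffordAlgebra.induction with
  | algebraMap r => simp [AlgHom.commutes]
  | ι v => simp [hatAut_ι, reverse_ι]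
  | mul a c ha hc => rw [map_mul (hatAut f hf) a c, reverse.map_mul, ha, hc, reverse.map_mul, map_mul]
  | add a c ha hc => simp [map_add, ha, hc]

lemma cconj_hatAut (f : V4 ≃ₗ[ℝ] V4) (hf : ∀ v, η (f v) = η v) (x : Cl) :
    cconj (hatAut f hf x) = hatAut f hf (cconj x) := by
  simp [cconj, involute_hatAut, reverse_hatAut]


/-- the induced automorphism f̂ of any linear isometry f preserves ĝ. -/
theorem stmt8 (b : Module.Basis (Finset (Fin 4)) ℝ Cl) (hb : ∀ I, b I = eI I)
    (f : V4 ≃ₗ[ℝ] V4) (hf : ∀ v, η (f v) = η v) (ψ φ : Cl) :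
    ghat (b.coord ∅) (hatAut f hf ψ) (hatAut f hf φ) = ghat (b.coord ∅) ψ φ := by
  unfold ghat
  rw [cconj_hatAut, cconj_hatAut, ← map_mul, ← map_mul, ← map_add,
    coord_hatAut b hb f hf]
end
end

section
/- The quadruple u defined by u_α = R_{ι(e_α)} (α = 0,1,2,3) is a force tensor, and it is fixed by the action of every linear isometry f of (ℝ⁴, η): f·u = u. -/
noncomputable section

open CliffordAlgebra

/-- A force tensor: a quadruple of endomorphisms of Cl(η), each commuting with all the
gamma matrices and anti-self-adjoint with respect to ĝ. -/
def IsForceTensor (π₀ : Cl →ₗ[ℝ] ℝ) (θ : Fin 4 → Module.End ℝ Cl) : Prop :=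
  ∀ α : Fin 4, (∀ v : V4, θ α ∘ₗ γ v = γ v ∘ₗ θ α) ∧
    ∀ ψ φ : Cl, ghat π₀ (θ α ψ) φ + ghat π₀ ψ (θ α φ) = 0

-- ===== auxiliary lemmas =====


lemma ηe_val : ∀ i : Fin 4, η (e i) = ![(-1 : ℝ), 1, 1, 1] i := by
  intro i
  fin_cases i <;>
    simp [η, e, QuadraticMap.weightedSumSquares_apply, Fin.sum_univ_four, Pi.single_apply]

lemma polar_ne {i j : Fin 4} (h : i ≠ j) : QuadraticMap.polar η (e i) (e j) = 0 := by
  fin_cases i <;> fin_cases j <;>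
    simp_all [QuadraticMap.polar, η, e, QuadraticMap.weightedSumSquares_apply,
      Fin.sum_univ_four, Pi.single_apply]

lemma swapg {i j : Fin 4} (h : i ≠ j) :
    ι η (e j) * ι η (e i) = -(ι η (e i) * ι η (e j)) := by
  have h2 := ι_mul_ι_add_swap (Q := η) (e i) (e j)
  rw [polar_ne h, map_zero] at h2
  exact eq_neg_of_add_eq_zero_left (by rw [add_comm]; exact h2)

lemma sort_eq' (s : Finset (Fin 4)) (l : List (Fin 4)) (h1 : l.Chain' (· < ·))
    (h2 : l.toFinset = s) : s.sort (· ≤ ·) = l := by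
  have hnd : l.Nodup := (List.isChain_iff_pairwise.mp h1).nodup
  have hperm : List.Perm l s.toList := by
    refine List.perm_of_nodup_nodup_toFinset_eq hnd s.nodup_toList ?_
    rw [h2, Finset.toList_toFinset]
  have h3 : l = s.sort (· ≤ ·) := List.Perm.eq_of_pairwise'
    ((List.isChain_iff_pairwise.mp h1).imp le_of_lt) (Finset.pairwise_sort s (· ≤ ·))
    ((Finset.sort_perm_toList (s := s) (r := (· ≤ ·))).trans hperm.symm).symm
  exact h3.symm

lemma sq0 : ι η (e 0) * ι η (e 0) = -1 := by rw [ι_sq_scalar, ηe_val]; simp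

lemma sq1 : ι η (e 1) * ι η (e 1) = 1 := by rw [ι_sq_scalar, ηe_val]; simp

lemma sq2 : ι η (e 2) * ι η (e 2) = 1 := by rw [ι_sq_scalar, ηe_val]; simp

lemma sq3 : ι η (e 3) * ι η (e 3) = 1 := by rw [ι_sq_scalar, ηe_val]; simp

lemma sq0t : ∀ x : Cl, ι η (e 0) * (ι η (e 0) * x) = -x := by intro x; rw [← mul_assoc, sq0]; simp

lemma sq1t : ∀ x : Cl, ι η (e 1) * (ι η (e 1) * x) = x := by intro x; rw [← mul_assoc, sq1]; simp

lemma sq2t : ∀ x : Cl, ι η (e 2) * (ι η (e 2) * x) = x := by intro x; rw [← mul_assoc, sq2]; simp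

lemma sq3t : ∀ x : Cl, ι η (e 3) * (ι η (e 3) * x) = x := by intro x; rw [← mul_assoc, sq3]; simp

lemma sw10 : ι η (e 1) * ι η (e 0) = -(ι η (e 0) * ι η (e 1)) := swapg (by decide)

lemma sw10t : ∀ x : Cl, ι η (e 1) * (ι η (e 0) * x) = -(ι η (e 0) * (ι η (e 1) * x)) := by intro x; rw [← mul_assoc, sw10, neg_mul, mul_assoc]

lemma sw20 : ι η (e 2) * ι η (e 0) = -(ι η (e 0) * ι η (e 2)) := swapg (by decide)

lemma sw20t : ∀ x : Cl, ι η (e 2) * (ι η (e 0) * x) = -(ι η (e 0) * (ι η (e 2) * x)) := by intro x; rw [← mul_assoc, sw20, neg_mul, mul_assoc]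

lemma sw30 : ι η (e 3) * ι η (e 0) = -(ι η (e 0) * ι η (e 3)) := swapg (by decide)

lemma sw30t : ∀ x : Cl, ι η (e 3) * (ι η (e 0) * x) = -(ι η (e 0) * (ι η (e 3) * x)) := by intro x; rw [← mul_assoc, sw30, neg_mul, mul_assoc]

lemma sw21 : ι η (e 2) * ι η (e 1) = -(ι η (e 1) * ι η (e 2)) := swapg (by decide)

lemma sw21t : ∀ x : Cl, ι η (e 2) * (ι η (e 1) * x) = -(ι η (e 1) * (ι η (e 2) * x)) := by intro x; rw [← mul_assoc, sw21, neg_mul, mul_assoc]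

lemma sw31 : ι η (e 3) * ι η (e 1) = -(ι η (e 1) * ι η (e 3)) := swapg (by decide)

lemma sw31t : ∀ x : Cl, ι η (e 3) * (ι η (e 1) * x) = -(ι η (e 1) * (ι η (e 3) * x)) := by intro x; rw [← mul_assoc, sw31, neg_mul, mul_assoc]

lemma sw32 : ι η (e 3) * ι η (e 2) = -(ι η (e 2) * ι η (e 3)) := swapg (by decide)

lemma sw32t : ∀ x : Cl, ι η (e 3) * (ι η (e 2) * x) = -(ι η (e 2) * (ι η (e 3) * x)) := by intro x; rw [← mul_assoc, sw32, neg_mul, mul_assoc]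

lemma eIve : eI (∅ : Finset (Fin 4)) = (1 : Cl) := by rw [eI, Finset.sort_empty]; simp

lemma eIv0 : eI ({0} : Finset (Fin 4)) = ι η (e 0) := by
  rw [eI, sort_eq' _ [0] (by simp [List.Chain', List.isChain_cons_cons]) (by decide)]
  simp [mul_assoc]

lemma eIv1 : eI ({1} : Finset (Fin 4)) = ι η (e 1) := by
  rw [eI, sort_eq' _ [1] (by simp [List.Chain', List.isChain_cons_cons]) (by decide)]
  simp [mul_assoc]

lemma eIv2 : eI ({2} : Finset (Fin 4)) = ι η (e 2) := by
  rw [eI, sort_eq' _ [2] (by simp [List.Chain', List.isChain_cons_cons]) (by decide)]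
  simp [mul_assoc]

lemma eIv3 : eI ({3} : Finset (Fin 4)) = ι η (e 3) := by
  rw [eI, sort_eq' _ [3] (by simp [List.Chain', List.isChain_cons_cons]) (by decide)]
  simp [mul_assoc]

lemma eIv01 : eI ({0,1} : Finset (Fin 4)) = ι η (e 0) * (ι η (e 1)) := by
  rw [eI, sort_eq' _ [0,1] (by simp [List.Chain', List.isChain_cons_cons]) (by decide)]
  simp [mul_assoc]

lemma eIv02 : eI ({0,2} : Finset (Fin 4)) = ι η (e 0) * (ι η (e 2)) := by
  rw [eI, sort_eq' _ [0,2] (by simp [List.Chain', List.isChain_cons_cons]) (by decide)]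
  simp [mul_assoc]

lemma eIv03 : eI ({0,3} : Finset (Fin 4)) = ι η (e 0) * (ι η (e 3)) := by
  rw [eI, sort_eq' _ [0,3] (by simp [List.Chain', List.isChain_cons_cons]) (by decide)]
  simp [mul_assoc]

lemma eIv12 : eI ({1,2} : Finset (Fin 4)) = ι η (e 1) * (ι η (e 2)) := by
  rw [eI, sort_eq' _ [1,2] (by simp [List.Chain', List.isChain_cons_cons]) (by decide)]
  simp [mul_assoc]

lemma eIv13 : eI ({1,3} : Finset (Fin 4)) = ι η (e 1) * (ι η (e 3)) := by
  rw [eI, sort_eq' _ [1,3] (by simp [List.Chain', List.isChain_cons_cons]) (by decide)]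
  simp [mul_assoc]

lemma eIv23 : eI ({2,3} : Finset (Fin 4)) = ι η (e 2) * (ι η (e 3)) := by
  rw [eI, sort_eq' _ [2,3] (by simp [List.Chain', List.isChain_cons_cons]) (by decide)]
  simp [mul_assoc]

lemma eIv012 : eI ({0,1,2} : Finset (Fin 4)) = ι η (e 0) * (ι η (e 1) * (ι η (e 2))) := by
  rw [eI, sort_eq' _ [0,1,2] (by simp [List.Chain', List.isChain_cons_cons]) (by decide)]
  simp [mul_assoc]

lemma eIv013 : eI ({0,1,3} : Finset (Fin 4)) = ι η (e 0) * (ι η (e 1) * (ι η (e 3))) := by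
  rw [eI, sort_eq' _ [0,1,3] (by simp [List.Chain', List.isChain_cons_cons]) (by decide)]
  simp [mul_assoc]

lemma eIv023 : eI ({0,2,3} : Finset (Fin 4)) = ι η (e 0) * (ι η (e 2) * (ι η (e 3))) := by
  rw [eI, sort_eq' _ [0,2,3] (by simp [List.Chain', List.isChain_cons_cons]) (by decide)]
  simp [mul_assoc]

lemma eIv123 : eI ({1,2,3} : Finset (Fin 4)) = ι η (e 1) * (ι η (e 2) * (ι η (e 3))) := by
  rw [eI, sort_eq' _ [1,2,3] (by simp [List.Chain', List.isChain_cons_cons]) (by decide)]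
  simp [mul_assoc]

lemma eIv0123 : eI ({0,1,2,3} : Finset (Fin 4)) = ι η (e 0) * (ι η (e 1) * (ι η (e 2) * (ι η (e 3)))) := by
  rw [eI, sort_eq' _ [0,1,2,3] (by simp [List.Chain', List.isChain_cons_cons]) (by decide)]
  simp [mul_assoc]

lemma coordeI (b : Module.Basis (Finset (Fin 4)) ℝ Cl) (hb : ∀ I, b I = eI I) (I : Finset (Fin 4)) :
    b.coord ∅ (eI I) = if I = ∅ then 1 else 0 := by
  rw [← hb, Module.Basis.coord_apply, Module.Basis.repr_self, Finsupp.single_apply]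

lemma pi0_e (b : Module.Basis (Finset (Fin 4)) ℝ Cl) (hb : ∀ I, b I = eI I) :
    b.coord ∅ ((1 : Cl)) = 1 := by
  rw [← eIve, coordeI b hb]; rw [if_pos rfl]

lemma pi0_0 (b : Module.Basis (Finset (Fin 4)) ℝ Cl) (hb : ∀ I, b I = eI I) :
    b.coord ∅ (ι η (e 0)) = 0 := by
  rw [← eIv0, coordeI b hb]; rw [if_neg (by decide)]

lemma pi0_1 (b : Module.Basis (Finset (Fin 4)) ℝ Cl) (hb : ∀ I, b I = eI I) :
    b.coord ∅ (ι η (e 1)) = 0 := by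
  rw [← eIv1, coordeI b hb]; rw [if_neg (by decide)]

lemma pi0_2 (b : Module.Basis (Finset (Fin 4)) ℝ Cl) (hb : ∀ I, b I = eI I) :
    b.coord ∅ (ι η (e 2)) = 0 := by
  rw [← eIv2, coordeI b hb]; rw [if_neg (by decide)]

lemma pi0_3 (b : Module.Basis (Finset (Fin 4)) ℝ Cl) (hb : ∀ I, b I = eI I) :
    b.coord ∅ (ι η (e 3)) = 0 := by
  rw [← eIv3, coordeI b hb]; rw [if_neg (by decide)]

lemma pi0_01 (b : Module.Basis (Finset (Fin 4)) ℝ Cl) (hb : ∀ I, b I = eI I) :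
    b.coord ∅ (ι η (e 0) * (ι η (e 1))) = 0 := by
  rw [← eIv01, coordeI b hb]; rw [if_neg (by decide)]

lemma pi0_02 (b : Module.Basis (Finset (Fin 4)) ℝ Cl) (hb : ∀ I, b I = eI I) :
    b.coord ∅ (ι η (e 0) * (ι η (e 2))) = 0 := by
  rw [← eIv02, coordeI b hb]; rw [if_neg (by decide)]

lemma pi0_03 (b : Module.Basis (Finset (Fin 4)) ℝ Cl) (hb : ∀ I, b I = eI I) :
    b.coord ∅ (ι η (e 0) * (ι η (e 3))) = 0 := by
  rw [← eIv03, coordeI b hb]; rw [if_neg (by decide)]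

lemma pi0_12 (b : Module.Basis (Finset (Fin 4)) ℝ Cl) (hb : ∀ I, b I = eI I) :
    b.coord ∅ (ι η (e 1) * (ι η (e 2))) = 0 := by
  rw [← eIv12, coordeI b hb]; rw [if_neg (by decide)]

lemma pi0_13 (b : Module.Basis (Finset (Fin 4)) ℝ Cl) (hb : ∀ I, b I = eI I) :
    b.coord ∅ (ι η (e 1) * (ι η (e 3))) = 0 := by
  rw [← eIv13, coordeI b hb]; rw [if_neg (by decide)]

lemma pi0_23 (b : Module.Basis (Finset (Fin 4)) ℝ Cl) (hb : ∀ I, b I = eI I) :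
    b.coord ∅ (ι η (e 2) * (ι η (e 3))) = 0 := by
  rw [← eIv23, coordeI b hb]; rw [if_neg (by decide)]

lemma pi0_012 (b : Module.Basis (Finset (Fin 4)) ℝ Cl) (hb : ∀ I, b I = eI I) :
    b.coord ∅ (ι η (e 0) * (ι η (e 1) * (ι η (e 2)))) = 0 := by
  rw [← eIv012, coordeI b hb]; rw [if_neg (by decide)]

lemma pi0_013 (b : Module.Basis (Finset (Fin 4)) ℝ Cl) (hb : ∀ I, b I = eI I) :
    b.coord ∅ (ι η (e 0) * (ι η (e 1) * (ι η (e 3)))) = 0 := by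
  rw [← eIv013, coordeI b hb]; rw [if_neg (by decide)]

lemma pi0_023 (b : Module.Basis (Finset (Fin 4)) ℝ Cl) (hb : ∀ I, b I = eI I) :
    b.coord ∅ (ι η (e 0) * (ι η (e 2) * (ι η (e 3)))) = 0 := by
  rw [← eIv023, coordeI b hb]; rw [if_neg (by decide)]

lemma pi0_123 (b : Module.Basis (Finset (Fin 4)) ℝ Cl) (hb : ∀ I, b I = eI I) :
    b.coord ∅ (ι η (e 1) * (ι η (e 2) * (ι η (e 3)))) = 0 := by
  rw [← eIv123, coordeI b hb]; rw [if_neg (by decide)]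

lemma pi0_0123 (b : Module.Basis (Finset (Fin 4)) ℝ Cl) (hb : ∀ I, b I = eI I) :
    b.coord ∅ (ι η (e 0) * (ι η (e 1) * (ι η (e 2) * (ι η (e 3))))) = 0 := by
  rw [← eIv0123, coordeI b hb]; rw [if_neg (by decide)]

lemma cases16 : ∀ J : Finset (Fin 4), J = (∅ : Finset (Fin 4)) ∨ J = ({0} : Finset (Fin 4)) ∨ J = ({1} : Finset (Fin 4)) ∨ J = ({2} : Finset (Fin 4)) ∨ J = ({3} : Finset (Fin 4)) ∨ J = ({0,1} : Finset (Fin 4)) ∨ J = ({0,2} : Finset (Fin 4)) ∨ J = ({0,3} : Finset (Fin 4)) ∨ J = ({1,2} : Finset (Fin 4)) ∨ J = ({1,3} : Finset (Fin 4)) ∨ J = ({2,3} : Finset (Fin 4)) ∨ J = ({0,1,2} : Finset (Fin 4)) ∨ J = ({0,1,3} : Finset (Fin 4)) ∨ J = ({0,2,3} : Finset (Fin 4)) ∨ J = ({1,2,3} : Finset (Fin 4)) ∨ J = ({0,1,2,3} : Finset (Fin 4)) := by decide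

lemma key (b : Module.Basis (Finset (Fin 4)) ℝ Cl) (hb : ∀ I, b I = eI I) (i : Fin 4) (x : Cl) :
    b.coord ∅ (x * ι η (e i)) = b.coord ∅ (ι η (e i) * x) := by
  have hmaps : ((b.coord ∅).comp (LinearMap.mulRight ℝ (ι η (e i)))) =
      ((b.coord ∅).comp (LinearMap.mulLeft ℝ (ι η (e i)))) := by
    apply b.ext
    intro J
    simp only [LinearMap.comp_apply, LinearMap.mulRight_apply, LinearMap.mulLeft_apply, hb]
    rcases cases16 J with rfl|rfl|rfl|rfl|rfl|rfl|rfl|rfl|rfl|rfl|rfl|rfl|rfl|rfl|rfl|rfl <;> fin_cases i <;>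
      simp only [eIve, eIv0, eIv1, eIv2, eIv3, eIv01, eIv02, eIv03, eIv12, eIv13, eIv23, eIv012, eIv013, eIv023, eIv123, eIv0123] <;>
      simp [ηe_val, mul_assoc, mul_one, one_mul, mul_neg, neg_mul, neg_neg, map_neg, sq0, sq1, sq2, sq3, sq0t, sq1t, sq2t, sq3t, sw10, sw10t, sw20, sw20t, sw30, sw30t, sw21, sw21t, sw31, sw31t, sw32, sw32t, pi0_e b hb, pi0_0 b hb, pi0_1 b hb, pi0_2 b hb, pi0_3 b hb, pi0_01 b hb, pi0_02 b hb, pi0_03 b hb, pi0_12 b hb, pi0_13 b hb, pi0_23 b hb, pi0_012 b hb, pi0_013 b hb, pi0_023 b hb, pi0_123 b hb, pi0_0123 b hb]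
  exact LinearMap.congr_fun hmaps x

/-- u, with u_α = R_{ι(e_α)}, is a force tensor fixed by the action of
every linear isometry of (ℝ⁴,η). -/
theorem stmt11 (b : Module.Basis (Finset (Fin 4)) ℝ Cl) (hb : ∀ I, b I = eI I) :
    IsForceTensor (b.coord ∅) (fun α => Rc (ι η (e α))) ∧
    ∀ (f : V4 ≃ₗ[ℝ] V4) (hf : ∀ v, η (f v) = η v),
      act f hf (fun α => Rc (ι η (e α))) = fun α => Rc (ι η (e α)) := by
  constructor
  · intro α
    constructor
    · intro v
      ext x
      simp [γ, Rc, LinearMap.mulLeft_apply, LinearMap.mulRight_apply, mul_assoc]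
    · intro ψ φ
      have hc : ∀ x : Cl, cconj (x * ι η (e α)) = -(ι η (e α) * cconj x) := by
        intro x
        simp [cconj, map_mul, reverse.map_mul, involute_ι, reverse_ι]
      have k1 : (b.coord ∅) (cconj ψ * (φ * ι η (e α))) =
          (b.coord ∅) (ι η (e α) * (cconj ψ * φ)) := by
        rw [← mul_assoc]; exact key b hb α _
      have k2 : (b.coord ∅) (cconj φ * (ψ * ι η (e α))) =
          (b.coord ∅) (ι η (e α) * (cconj φ * ψ)) := by
        rw [← mul_assoc]; exact key b hb α _
      simp only [ghat, Rc, LinearMap.mulRight_apply, hc, map_add, neg_mul, map_neg, mul_assoc]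
      linarith [k1, k2]
  · intro f hf
    funext α
    have hι : ∀ (g : V4 ≃ₗ[ℝ] V4) (hg : ∀ v, η (g v) = η v) (v : V4),
        hatAut g hg (ι η v) = ι η (g v) := by
      intro g hg v
      simp [hatAut, lift_ι_apply]
    have hid : ∀ x : Cl, hatAut f hf (hatAut f.symm (isometry_symm f hf) x) = x := by
      have hcomp : (hatAut f hf).comp (hatAut f.symm (isometry_symm f hf)) = AlgHom.id ℝ Cl := by
        apply CliffordAlgebra.hom_ext
        apply LinearMap.ext; intro v
        simp [hι]
      intro x
      exact AlgHom.congr_fun hcomp x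
    apply LinearMap.ext
    intro x
    have hsingle : ∑ β : Fin 4, f.symm (e α) β • e β = f.symm (e α) := by
      conv_rhs => rw [← Finset.univ_sum_single (f.symm (e α))]
      refine Finset.sum_congr rfl fun β _ => ?_
      simp only [e]
      rw [← Pi.single_smul, smul_eq_mul, mul_one]
    have hL : ∑ β : Fin 4, f.symm (e α) β • ι η (f (e β)) = ι η (f (f.symm (e α))) := by
      have := map_sum ((ι η (M := V4)) ∘ₗ (f : V4 →ₗ[ℝ] V4))
        (fun β : Fin 4 => f.symm (e α) β • e β) Finset.univ
      simp only [map_smul, LinearMap.comp_apply, LinearEquiv.coe_coe] at this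
      rw [← this, hsingle]
    simp only [act, LinearMap.sum_apply, LinearMap.smul_apply, LinearMap.comp_apply,
      AlgHom.toLinearMap_apply, Rc, LinearMap.mulRight_apply, map_mul, hid, hι]
    calc ∑ β : Fin 4, f.symm (e α) β • (x * ι η (f (e β)))
        = x * ∑ β : Fin 4, f.symm (e α) β • ι η (f (e β)) := by
          rw [Finset.mul_sum]
          exact Finset.sum_congr rfl fun β _ => (mul_smul_comm _ _ _).symm
      _ = x * ι η (e α) := by rw [hL, f.apply_symm_apply]
end
end

section
/- Let Q be a quadratic form on a finite-dimensional real vector space V with polar bilinear form B, and let a : V → V be a linear map that is skew-adjoint with respect to B, i.e. B(a v, w) + B(v, a w) = 0 for all v, w ∈ V. Then there exists a unique ℝ-linear derivation D of the Clifford algebra Cl(Q) (that is, D(x·y) = D(x)·y + x·D(y) for all x, y) such that D(ι v) = ι(a v) for every v ∈ V. -/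
set_option maxHeartbeats 800000

noncomputable section

open CliffordAlgebra TrivSqZeroExt

/-- a linear map skew-adjoint with respect to the polar form of Q extends
uniquely to a derivation of the Clifford algebra Cl(Q). -/
theorem stmt12 {V : Type*} [AddCommGroup V] [Module ℝ V] [FiniteDimensional ℝ V]
    (Q : QuadraticForm ℝ V) (a : V →ₗ[ℝ] V)
    (ha : ∀ v w : V,
      (Q (a v + w) - Q (a v) - Q w) / 2 + (Q (v + a w) - Q v - Q (a w)) / 2 = 0) :
    ∃! D : CliffordAlgebra Q →ₗ[ℝ] CliffordAlgebra Q,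
      (∀ x y : CliffordAlgebra Q, D (x * y) = D x * y + x * D y) ∧
      ∀ v : V, D (CliffordAlgebra.ι Q v) = CliffordAlgebra.ι Q (a v) := by
  have key : ∀ v : V, ι Q v * ι Q (a v) + ι Q (a v) * ι Q v = 0 := by
    intro v
    rw [CliffordAlgebra.ι_mul_ι_add_swap]
    have h := ha v v
    have : QuadraticMap.polar Q v (a v) = 0 := by
      simp only [QuadraticMap.polar]
      rw [add_comm (a v) v] at h
      linarith
    rw [this, map_zero]
  set C := CliffordAlgebra Q with hC
  let f : V →ₗ[ℝ] TrivSqZeroExt C C :=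
    LinearMap.prod (ι Q) ((ι Q).comp a)
  have hfst : ∀ v, (f v).fst = ι Q v := fun _ => rfl
  have hsnd : ∀ v, (f v).snd = ι Q (a v) := fun _ => rfl
  have hf : ∀ v, f v * f v = algebraMap ℝ (TrivSqZeroExt C C) (Q v) := by
    intro v
    ext
    · rw [fst_mul, hfst, CliffordAlgebra.ι_sq_scalar, TrivSqZeroExt.algebraMap_eq_inl', fst_inl]
    · rw [snd_mul, hfst, hsnd, TrivSqZeroExt.algebraMap_eq_inl', snd_inl,
        smul_eq_mul, MulOpposite.smul_eq_mul_unop, MulOpposite.unop_op]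
      exact key v
  let F : C →ₐ[ℝ] TrivSqZeroExt C C := CliffordAlgebra.lift Q ⟨f, hf⟩
  have hFι : ∀ v, F (ι Q v) = f v := fun v => CliffordAlgebra.lift_ι_apply f hf v
  have hFfst : ∀ x : C, (F x).fst = x := by
    have : (TrivSqZeroExt.fstHom ℝ C C).comp F = AlgHom.id ℝ C := by
      apply CliffordAlgebra.hom_ext
      ext v
      simp [hFι, hfst]
      rfl
    intro x
    exact congrArg (fun g => g x) (congrArg DFunLike.coe this)
  let D : C →ₗ[ℝ] C :=
    (TrivSqZeroExt.sndHom C C |>.restrictScalars ℝ) ∘ₗ F.toLinearMap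
  have hDx : ∀ x, D x = (F x).snd := fun _ => rfl
  have hDer : ∀ x y : C, D (x * y) = D x * y + x * D y := by
    intro x y
    rw [hDx, hDx, hDx, map_mul, snd_mul, hFfst, hFfst, smul_eq_mul,
      MulOpposite.smul_eq_mul_unop, MulOpposite.unop_op, add_comm]
  have hDι : ∀ v, D (ι Q v) = ι Q (a v) := fun v => by rw [hDx, hFι, hsnd]
  refine ⟨D, ⟨hDer, hDι⟩, ?_⟩
  rintro D' ⟨hmul, hι⟩
  have hone : ∀ (E : C →ₗ[ℝ] C), (∀ x y : C, E (x * y) = E x * y + x * E y) →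
      ∀ r : ℝ, E (algebraMap ℝ C r) = 0 := by
    intro E hE r
    have h1 : E 1 = 0 := by
      have := hE 1 1
      simpa using this
    rw [Algebra.algebraMap_eq_smul_one, map_smul, h1, smul_zero]
  ext x
  induction x using CliffordAlgebra.induction with
  | algebraMap r => rw [hone D' hmul, hone D hDer]
  | ι v => rw [hι, hDι]
  | mul x y hx hy => rw [hmul, hDer, hx, hy]
  | add x y hx hy => rw [map_add, map_add, hx, hy]
end
end

section
/- The space of Fierz tensors, namely the subspace of all F : {0,1,2,3}³ → ℝ satisfying (i) F(α,σ,ρ) = −F(α,ρ,σ) for all α,ρ,σ, (ii) Σ_{α,ρ} η_{αρ} F(α,ρ,σ) = 0 for each σ, and (iii) Σ_{α,ρ,σ} ε_{αρστ} F(α,ρ,σ) = 0 for each τ, is a real vector space of dimension 16. -/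
set_option maxHeartbeats 1000000


noncomputable section

/-- Entries of the Minkowski matrix diag(−1,1,1,1). -/
def ηm (α β : Fin 4) : ℝ := if α = β then (if α = 0 then -1 else 1) else 0

/-- The totally antisymmetric symbol on four indices with ε₀₁₂₃ = 1. -/
def eps (α ρ σ τ : Fin 4) : ℝ :=
  if h : Function.Bijective ![α, ρ, σ, τ] then
    ((Equiv.Perm.sign (Equiv.ofBijective _ h) : ℤ) : ℝ)
  else 0

/-- The Fierz tensor conditions. -/
def IsFierz (F : Fin 4 → Fin 4 → Fin 4 → ℝ) : Prop :=
  (∀ α ρ σ : Fin 4, F α σ ρ = -(F α ρ σ)) ∧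
  (∀ σ : Fin 4, ∑ α : Fin 4, ∑ ρ : Fin 4, ηm α ρ * F α ρ σ = 0) ∧
  (∀ τ : Fin 4, ∑ α : Fin 4, ∑ ρ : Fin 4, ∑ σ : Fin 4, eps α ρ σ τ * F α ρ σ = 0)

/-- Integer version of `eps`. -/
def epsZ (a b c d : Fin 4) : ℤ :=
  if h : Function.Bijective ![a, b, c, d] then
    ((Equiv.Perm.sign (Equiv.ofBijective _ h) : ℤ)) else 0

lemma eps_eq (a b c d : Fin 4) : eps a b c d = ((epsZ a b c d : ℤ) : ℝ) := by
  unfold eps epsZ; split <;> simp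

/-- Formula version of the antisymmetric symbol. -/
def epsT (a b c d : Fin 4) : ℤ :=
  ((b:ℤ)-a)*((c:ℤ)-a)*((d:ℤ)-a)*((c:ℤ)-b)*((d:ℤ)-b)*((d:ℤ)-c) / 12

lemma epsZ_eq : epsZ = epsT := by decide

lemma cf0 : ((0:Fin 4):ℤ) = 0 := rfl
lemma cf1 : ((1:Fin 4):ℤ) = 1 := rfl
lemma cf2 : ((2:Fin 4):ℤ) = 2 := rfl
lemma cf3 : ((3:Fin 4):ℤ) = 3 := rfl

lemma fmk0 (h : 0 < 4) : (⟨0, h⟩ : Fin 4) = 0 := rfl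
lemma fmk1 (h : 1 < 4) : (⟨1, h⟩ : Fin 4) = 1 := rfl
lemma fmk2 (h : 2 < 4) : (⟨2, h⟩ : Fin 4) = 2 := rfl
lemma fmk3 (h : 3 < 4) : (⟨3, h⟩ : Fin 4) = 3 := rfl

@[simp] lemma etam_00 : ηm 0 0 = -1 := rfl
@[simp] lemma etam_01 : ηm 0 1 = 0 := rfl
@[simp] lemma etam_02 : ηm 0 2 = 0 := rfl
@[simp] lemma etam_03 : ηm 0 3 = 0 := rfl
@[simp] lemma etam_10 : ηm 1 0 = 0 := rfl
@[simp] lemma etam_11 : ηm 1 1 = 1 := rfl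
@[simp] lemma etam_12 : ηm 1 2 = 0 := rfl
@[simp] lemma etam_13 : ηm 1 3 = 0 := rfl
@[simp] lemma etam_20 : ηm 2 0 = 0 := rfl
@[simp] lemma etam_21 : ηm 2 1 = 0 := rfl
@[simp] lemma etam_22 : ηm 2 2 = 1 := rfl
@[simp] lemma etam_23 : ηm 2 3 = 0 := rfl
@[simp] lemma etam_30 : ηm 3 0 = 0 := rfl
@[simp] lemma etam_31 : ηm 3 1 = 0 := rfl
@[simp] lemma etam_32 : ηm 3 2 = 0 := rfl
@[simp] lemma etam_33 : ηm 3 3 = 1 := rfl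

/-- Build a Fierz tensor out of 16 free coordinates. -/
def buildF (c : Fin 16 → ℝ) (α ρ σ : Fin 4) : ℝ :=
  match α.val * 16 + ρ.val * 4 + σ.val with
  | 0 => 0
  | 1 => c 0
  | 2 => c 1
  | 3 => c 9 + c 15
  | 4 => -(c 0)
  | 5 => 0
  | 6 => c 2
  | 7 => c 3
  | 8 => -(c 1)
  | 9 => -(c 2)
  | 10 => 0
  | 11 => c 4
  | 12 => -(c 9 + c 15)
  | 13 => -(c 3)
  | 14 => -(c 4)
  | 15 => 0
  | 16 => 0
  | 17 => c 5
  | 18 => c 6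
  | 19 => c 7
  | 20 => -(c 5)
  | 21 => 0
  | 22 => c 8
  | 23 => c 9
  | 24 => -(c 6)
  | 25 => -(c 8)
  | 26 => 0
  | 27 => c 10
  | 28 => -(c 7)
  | 29 => -(c 9)
  | 30 => -(c 10)
  | 31 => 0
  | 32 => 0
  | 33 => c 6 - c 2
  | 34 => c 11
  | 35 => c 12
  | 36 => -(c 6 - c 2)
  | 37 => 0
  | 38 => c 13
  | 39 => c 14
  | 40 => -(c 11)
  | 41 => -(c 13)
  | 42 => 0
  | 43 => c 15
  | 44 => -(c 12)
  | 45 => -(c 14)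
  | 46 => -(c 15)
  | 47 => 0
  | 48 => 0
  | 49 => c 7 - c 3
  | 50 => c 12 - c 4
  | 51 => -c 5 - c 11
  | 52 => -(c 7 - c 3)
  | 53 => 0
  | 54 => c 14 - c 10
  | 55 => -c 0 - c 13
  | 56 => -(c 12 - c 4)
  | 57 => -(c 14 - c 10)
  | 58 => 0
  | 59 => c 8 - c 1
  | 60 => -(-c 5 - c 11)
  | 61 => -(-c 0 - c 13)
  | 62 => -(c 8 - c 1)
  | 63 => 0
  | _ => 0

lemma bF_000 (c : Fin 16 → ℝ) : buildF c 0 0 0 = 0 := rfl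
lemma bF_001 (c : Fin 16 → ℝ) : buildF c 0 0 1 = c 0 := rfl
lemma bF_002 (c : Fin 16 → ℝ) : buildF c 0 0 2 = c 1 := rfl
lemma bF_003 (c : Fin 16 → ℝ) : buildF c 0 0 3 = c 9 + c 15 := rfl
lemma bF_010 (c : Fin 16 → ℝ) : buildF c 0 1 0 = -(c 0) := rfl
lemma bF_011 (c : Fin 16 → ℝ) : buildF c 0 1 1 = 0 := rfl
lemma bF_012 (c : Fin 16 → ℝ) : buildF c 0 1 2 = c 2 := rfl
lemma bF_013 (c : Fin 16 → ℝ) : buildF c 0 1 3 = c 3 := rfl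
lemma bF_020 (c : Fin 16 → ℝ) : buildF c 0 2 0 = -(c 1) := rfl
lemma bF_021 (c : Fin 16 → ℝ) : buildF c 0 2 1 = -(c 2) := rfl
lemma bF_022 (c : Fin 16 → ℝ) : buildF c 0 2 2 = 0 := rfl
lemma bF_023 (c : Fin 16 → ℝ) : buildF c 0 2 3 = c 4 := rfl
lemma bF_030 (c : Fin 16 → ℝ) : buildF c 0 3 0 = -(c 9 + c 15) := rfl
lemma bF_031 (c : Fin 16 → ℝ) : buildF c 0 3 1 = -(c 3) := rfl
lemma bF_032 (c : Fin 16 → ℝ) : buildF c 0 3 2 = -(c 4) := rfl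
lemma bF_033 (c : Fin 16 → ℝ) : buildF c 0 3 3 = 0 := rfl
lemma bF_100 (c : Fin 16 → ℝ) : buildF c 1 0 0 = 0 := rfl
lemma bF_101 (c : Fin 16 → ℝ) : buildF c 1 0 1 = c 5 := rfl
lemma bF_102 (c : Fin 16 → ℝ) : buildF c 1 0 2 = c 6 := rfl
lemma bF_103 (c : Fin 16 → ℝ) : buildF c 1 0 3 = c 7 := rfl
lemma bF_110 (c : Fin 16 → ℝ) : buildF c 1 1 0 = -(c 5) := rfl
lemma bF_111 (c : Fin 16 → ℝ) : buildF c 1 1 1 = 0 := rfl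
lemma bF_112 (c : Fin 16 → ℝ) : buildF c 1 1 2 = c 8 := rfl
lemma bF_113 (c : Fin 16 → ℝ) : buildF c 1 1 3 = c 9 := rfl
lemma bF_120 (c : Fin 16 → ℝ) : buildF c 1 2 0 = -(c 6) := rfl
lemma bF_121 (c : Fin 16 → ℝ) : buildF c 1 2 1 = -(c 8) := rfl
lemma bF_122 (c : Fin 16 → ℝ) : buildF c 1 2 2 = 0 := rfl
lemma bF_123 (c : Fin 16 → ℝ) : buildF c 1 2 3 = c 10 := rfl
lemma bF_130 (c : Fin 16 → ℝ) : buildF c 1 3 0 = -(c 7) := rfl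
lemma bF_131 (c : Fin 16 → ℝ) : buildF c 1 3 1 = -(c 9) := rfl
lemma bF_132 (c : Fin 16 → ℝ) : buildF c 1 3 2 = -(c 10) := rfl
lemma bF_133 (c : Fin 16 → ℝ) : buildF c 1 3 3 = 0 := rfl
lemma bF_200 (c : Fin 16 → ℝ) : buildF c 2 0 0 = 0 := rfl
lemma bF_201 (c : Fin 16 → ℝ) : buildF c 2 0 1 = c 6 - c 2 := rfl
lemma bF_202 (c : Fin 16 → ℝ) : buildF c 2 0 2 = c 11 := rfl
lemma bF_203 (c : Fin 16 → ℝ) : buildF c 2 0 3 = c 12 := rfl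
lemma bF_210 (c : Fin 16 → ℝ) : buildF c 2 1 0 = -(c 6 - c 2) := rfl
lemma bF_211 (c : Fin 16 → ℝ) : buildF c 2 1 1 = 0 := rfl
lemma bF_212 (c : Fin 16 → ℝ) : buildF c 2 1 2 = c 13 := rfl
lemma bF_213 (c : Fin 16 → ℝ) : buildF c 2 1 3 = c 14 := rfl
lemma bF_220 (c : Fin 16 → ℝ) : buildF c 2 2 0 = -(c 11) := rfl
lemma bF_221 (c : Fin 16 → ℝ) : buildF c 2 2 1 = -(c 13) := rfl
lemma bF_222 (c : Fin 16 → ℝ) : buildF c 2 2 2 = 0 := rfl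
lemma bF_223 (c : Fin 16 → ℝ) : buildF c 2 2 3 = c 15 := rfl
lemma bF_230 (c : Fin 16 → ℝ) : buildF c 2 3 0 = -(c 12) := rfl
lemma bF_231 (c : Fin 16 → ℝ) : buildF c 2 3 1 = -(c 14) := rfl
lemma bF_232 (c : Fin 16 → ℝ) : buildF c 2 3 2 = -(c 15) := rfl
lemma bF_233 (c : Fin 16 → ℝ) : buildF c 2 3 3 = 0 := rfl
lemma bF_300 (c : Fin 16 → ℝ) : buildF c 3 0 0 = 0 := rfl
lemma bF_301 (c : Fin 16 → ℝ) : buildF c 3 0 1 = c 7 - c 3 := rfl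
lemma bF_302 (c : Fin 16 → ℝ) : buildF c 3 0 2 = c 12 - c 4 := rfl
lemma bF_303 (c : Fin 16 → ℝ) : buildF c 3 0 3 = -c 5 - c 11 := rfl
lemma bF_310 (c : Fin 16 → ℝ) : buildF c 3 1 0 = -(c 7 - c 3) := rfl
lemma bF_311 (c : Fin 16 → ℝ) : buildF c 3 1 1 = 0 := rfl
lemma bF_312 (c : Fin 16 → ℝ) : buildF c 3 1 2 = c 14 - c 10 := rfl
lemma bF_313 (c : Fin 16 → ℝ) : buildF c 3 1 3 = -c 0 - c 13 := rfl
lemma bF_320 (c : Fin 16 → ℝ) : buildF c 3 2 0 = -(c 12 - c 4) := rfl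
lemma bF_321 (c : Fin 16 → ℝ) : buildF c 3 2 1 = -(c 14 - c 10) := rfl
lemma bF_322 (c : Fin 16 → ℝ) : buildF c 3 2 2 = 0 := rfl
lemma bF_323 (c : Fin 16 → ℝ) : buildF c 3 2 3 = c 8 - c 1 := rfl
lemma bF_330 (c : Fin 16 → ℝ) : buildF c 3 3 0 = -(-c 5 - c 11) := rfl
lemma bF_331 (c : Fin 16 → ℝ) : buildF c 3 3 1 = -(-c 0 - c 13) := rfl
lemma bF_332 (c : Fin 16 → ℝ) : buildF c 3 3 2 = -(c 8 - c 1) := rfl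
lemma bF_333 (c : Fin 16 → ℝ) : buildF c 3 3 3 = 0 := rfl

/-- The 16 free coordinates of a tensor. -/
def coords (F : Fin 4 → Fin 4 → Fin 4 → ℝ) (i : Fin 16) : ℝ :=
  match i.val with
  | 0 => F 0 0 1
  | 1 => F 0 0 2
  | 2 => F 0 1 2
  | 3 => F 0 1 3
  | 4 => F 0 2 3
  | 5 => F 1 0 1
  | 6 => F 1 0 2
  | 7 => F 1 0 3
  | 8 => F 1 1 2
  | 9 => F 1 1 3
  | 10 => F 1 2 3
  | 11 => F 2 0 2
  | 12 => F 2 0 3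
  | 13 => F 2 1 2
  | 14 => F 2 1 3
  | 15 => F 2 2 3
  | _ => 0

lemma co_0 (F : Fin 4 → Fin 4 → Fin 4 → ℝ) : coords F 0 = F 0 0 1 := rfl
lemma co_1 (F : Fin 4 → Fin 4 → Fin 4 → ℝ) : coords F 1 = F 0 0 2 := rfl
lemma co_2 (F : Fin 4 → Fin 4 → Fin 4 → ℝ) : coords F 2 = F 0 1 2 := rfl
lemma co_3 (F : Fin 4 → Fin 4 → Fin 4 → ℝ) : coords F 3 = F 0 1 3 := rfl
lemma co_4 (F : Fin 4 → Fin 4 → Fin 4 → ℝ) : coords F 4 = F 0 2 3 := rfl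
lemma co_5 (F : Fin 4 → Fin 4 → Fin 4 → ℝ) : coords F 5 = F 1 0 1 := rfl
lemma co_6 (F : Fin 4 → Fin 4 → Fin 4 → ℝ) : coords F 6 = F 1 0 2 := rfl
lemma co_7 (F : Fin 4 → Fin 4 → Fin 4 → ℝ) : coords F 7 = F 1 0 3 := rfl
lemma co_8 (F : Fin 4 → Fin 4 → Fin 4 → ℝ) : coords F 8 = F 1 1 2 := rfl
lemma co_9 (F : Fin 4 → Fin 4 → Fin 4 → ℝ) : coords F 9 = F 1 1 3 := rfl
lemma co_10 (F : Fin 4 → Fin 4 → Fin 4 → ℝ) : coords F 10 = F 1 2 3 := rfl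
lemma co_11 (F : Fin 4 → Fin 4 → Fin 4 → ℝ) : coords F 11 = F 2 0 2 := rfl
lemma co_12 (F : Fin 4 → Fin 4 → Fin 4 → ℝ) : coords F 12 = F 2 0 3 := rfl
lemma co_13 (F : Fin 4 → Fin 4 → Fin 4 → ℝ) : coords F 13 = F 2 1 2 := rfl
lemma co_14 (F : Fin 4 → Fin 4 → Fin 4 → ℝ) : coords F 14 = F 2 1 3 := rfl
lemma co_15 (F : Fin 4 → Fin 4 → Fin 4 → ℝ) : coords F 15 = F 2 2 3 := rfl

lemma buildF_antisym (c : Fin 16 → ℝ) : ∀ α ρ σ : Fin 4, buildF c α σ ρ = -(buildF c α ρ σ) := by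
  intro α ρ σ
  fin_cases α <;> fin_cases ρ <;> fin_cases σ <;> (simp only [buildF]; try ring)

lemma buildF_trace (c : Fin 16 → ℝ) :
    ∀ σ : Fin 4, ∑ α : Fin 4, ∑ ρ : Fin 4, ηm α ρ * buildF c α ρ σ = 0 := by
  intro σ
  fin_cases σ <;>
    · simp only [Fin.sum_univ_four,
        etam_00, etam_01, etam_02, etam_03, etam_10, etam_11, etam_12, etam_13,
        etam_20, etam_21, etam_22, etam_23, etam_30, etam_31, etam_32, etam_33]
      simp only [buildF, Fin.val_zero, Fin.val_one, Fin.val_two, (show ((3 : Fin 4) : ℕ) = 3 from rfl)]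
      ring

lemma buildF_eps (c : Fin 16 → ℝ) :
    ∀ τ : Fin 4, ∑ α : Fin 4, ∑ ρ : Fin 4, ∑ σ : Fin 4, eps α ρ σ τ * buildF c α ρ σ = 0 := by
  intro τ
  fin_cases τ <;>
    · simp only [Fin.sum_univ_four, eps_eq, epsZ_eq, epsT, cf0, cf1, cf2, cf3]
      norm_num
      simp only [buildF, Fin.val_zero, Fin.val_one, Fin.val_two, (show ((3 : Fin 4) : ℕ) = 3 from rfl)]
      try ring

lemma isFierz_buildF (c : Fin 16 → ℝ) : IsFierz (buildF c) :=
  ⟨buildF_antisym c, buildF_trace c, buildF_eps c⟩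

lemma coords_buildF (c : Fin 16 → ℝ) : coords (buildF c) = c := by
  funext i
  fin_cases i <;> rfl

lemma buildF_coords {F : Fin 4 → Fin 4 → Fin 4 → ℝ} (hF : IsFierz F) :
    buildF (coords F) = F := by
  obtain ⟨h1, h2, h3⟩ := hF
  have e0 := h2 0; have e1 := h2 1; have e2 := h2 2; have e3 := h2 3
  simp only [Fin.sum_univ_four,
      etam_00, etam_01, etam_02, etam_03, etam_10, etam_11, etam_12, etam_13,
      etam_20, etam_21, etam_22, etam_23, etam_30, etam_31, etam_32, etam_33,
      neg_one_mul, one_mul, zero_mul, add_zero, zero_add] at e0 e1 e2 e3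
  have f0 := h3 0; have f1 := h3 1; have f2 := h3 2; have f3 := h3 3
  simp only [Fin.sum_univ_four, eps_eq, epsZ_eq, epsT, cf0, cf1, cf2, cf3] at f0 f1 f2 f3
  norm_num at f0 f1 f2 f3
  funext α ρ σ
  fin_cases α <;> fin_cases ρ <;> fin_cases σ <;>
    (simp only [fmk0, fmk1, fmk2, fmk3, buildF, co_0, co_1, co_2, co_3, co_4, co_5, co_6, co_7, co_8, co_9, co_10, co_11, co_12, co_13, co_14, co_15]; try rfl) <;>
    linarith [h1 0 0 0, h1 0 0 1, h1 0 0 2, h1 0 0 3, h1 0 1 1, h1 0 1 2, h1 0 1 3, h1 0 2 2, h1 0 2 3, h1 0 3 3, h1 1 0 0, h1 1 0 1, h1 1 0 2, h1 1 0 3, h1 1 1 1, h1 1 1 2, h1 1 1 3, h1 1 2 2, h1 1 2 3, h1 1 3 3, h1 2 0 0, h1 2 0 1, h1 2 0 2, h1 2 0 3, h1 2 1 1, h1 2 1 2, h1 2 1 3, h1 2 2 2, h1 2 2 3, h1 2 3 3, h1 3 0 0, h1 3 0 1, h1 3 0 2, h1 3 0 3, h1 3 1 1, h1 3 1 2, h1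 3 1 3, h1 3 2 2, h1 3 2 3, h1 3 3 3, e0, e1, e2, e3, f0, f1, f2, f3]

/-- The submodule of Fierz tensors. -/
def FierzS : Submodule ℝ (Fin 4 → Fin 4 → Fin 4 → ℝ) where
  carrier := {F | IsFierz F}
  add_mem' := by
    rintro F G ⟨hF1, hF2, hF3⟩ ⟨hG1, hG2, hG3⟩
    refine ⟨fun α ρ σ => ?_, fun σ => ?_, fun τ => ?_⟩
    · simp only [Pi.add_apply, hF1 α ρ σ, hG1 α ρ σ]; ring
    · simp only [Pi.add_apply, mul_add, Finset.sum_add_distrib, hF2 σ, hG2 σ, add_zero]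
    · simp only [Pi.add_apply, mul_add, Finset.sum_add_distrib, hF3 τ, hG3 τ, add_zero]
  zero_mem' := ⟨fun α ρ σ => by simp, fun σ => by simp, fun τ => by simp⟩
  smul_mem' := by
    rintro a F ⟨hF1, hF2, hF3⟩
    refine ⟨fun α ρ σ => ?_, fun σ => ?_, fun τ => ?_⟩
    · simp only [Pi.smul_apply, smul_eq_mul, hF1 α ρ σ]; ring
    · simp only [Pi.smul_apply, smul_eq_mul, mul_left_comm _ a, ← Finset.mul_sum, hF2 σ,
        mul_zero]
    · simp only [Pi.smul_apply, smul_eq_mul, mul_left_comm _ a, ← Finset.mul_sum, hF3 τ,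
        mul_zero]

/-- The coordinate linear equivalence. -/
def fierzEquiv : (Fin 16 → ℝ) ≃ₗ[ℝ] FierzS where
  toFun c := ⟨buildF c, isFierz_buildF c⟩
  invFun F := coords F.1
  map_add' c c' := by
    ext α ρ σ
    fin_cases α <;> fin_cases ρ <;> fin_cases σ <;>
      (simp only [buildF, Pi.add_apply, Submodule.coe_add]; try ring)
  map_smul' a c := by
    ext α ρ σ
    fin_cases α <;> fin_cases ρ <;> fin_cases σ <;>
      (simp only [buildF, Pi.smul_apply, smul_eq_mul, RingHom.id_apply,
        SetLike.val_smul, SetLike.mk_smul_mk]; try ring)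
  left_inv c := coords_buildF c
  right_inv F := Subtype.ext (buildF_coords F.2)

/-- the space of Fierz tensors is a 16-dimensional real vector space. -/
theorem stmt16 :
    ∃ S : Submodule ℝ (Fin 4 → Fin 4 → Fin 4 → ℝ),
      (S : Set (Fin 4 → Fin 4 → Fin 4 → ℝ)) = {F | IsFierz F} ∧
      Module.finrank ℝ S = 16 := by
  refine ⟨FierzS, rfl, ?_⟩
  rw [← fierzEquiv.finrank_eq]
  simp [Module.finrank_pi]
end
end
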